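/- arXiv:2311.04421 — 3 statements merged into one kernel-verified Lean document; each statement's English description precedes it below -/
import Mathlib

section
/- If an exact sequence Φ = {φ_k}_{k≥1} in a separable Hilbert space H has a reproducing partner (i.e., there exists Ψ with ⟨f,g⟩ = Σ_k ⟨f, ψ_k⟩⟨φ_k, g⟩ for all f, g), then every f ∈ H has a unique weak expansion f = Σ_k c_k φ_k; in other words, Φ is a weak Schauder basis for H. -/
open Filter Topology
open scoped InnerProductSpace

/-- If an exact sequence `Φ` in a separable Hilbert space has a reproducing partner,
then every `f ∈ H` has a unique weak expansion `f = Σ c_k φ_k`; i.e. `Φ` is a weak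
Schauder basis for `H`. -/
theorem exact_with_reproducing_partner_is_weak_schauder_basis
    {H : Type*} [NormedAddCommGroup H] [InnerProductSpace ℂ H]
    [CompleteSpace H] [TopologicalSpace.SeparableSpace H]
    (φ : ℕ → H)
    (hcomplete : Dense (Submodule.span ℂ (Set.range φ) : Set H))
    (hminimal : ∀ m : ℕ, φ m ∉ closure (Submodule.span ℂ (φ '' {n | n ≠ m}) : Set H))
    (hrep : ∃ ψ : ℕ → H, ∀ f g : H,
      Tendsto (fun N => ∑ k ∈ Finset.range N, ⟪f, ψ k⟫_ℂ * ⟪φ k, g⟫_ℂ)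
        atTop (𝓝 ⟪f, g⟫_ℂ)) :
    ∀ f : H, ∃! c : ℕ → ℂ, ∀ g : H,
      Tendsto (fun N => ∑ k ∈ Finset.range N, c k * ⟪φ k, g⟫_ℂ)
        atTop (𝓝 ⟪f, g⟫_ℂ) := by
  obtain ⟨ψ, hψ⟩ := hrep
  intro f
  refine ⟨fun k => ⟪f, ψ k⟫_ℂ, fun g => hψ f g, ?_⟩
  -- uniqueness
  intro c hc
  funext m
  -- build a biorthogonal test vector for index m
  set K : Submodule ℂ H := (Submodule.span ℂ (φ '' {n | n ≠ m})).topologicalClosure with hK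
  haveI : CompleteSpace K := by
    rw [hK]; exact (Submodule.isClosed_topologicalClosure _).completeSpace_coe
  set v : H := φ m - (K.orthogonalProjection (φ m) : H) with hv
  have hvK : v ∈ Kᗮ := Submodule.sub_starProjection_mem_orthogonal (K := K) (φ m)
  have hφmK : φ m ∉ K := by
    intro h
    apply hminimal m
    have : (K : Set H) = closure (Submodule.span ℂ (φ '' {n | n ≠ m}) : Set H) :=
      Submodule.topologicalClosure_coe _
    rw [← this]; exact h
  have hvne : v ≠ 0 := by
    intro h
    apply hφmK
    have : φ m = (K.orthogonalProjection (φ m) : H) := by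
      have := sub_eq_zero.mp h; simpa using this
    rw [this]; exact (K.orthogonalProjection (φ m)).2
  have hmm : ⟪φ m, v⟫_ℂ = (‖v‖ : ℂ) ^ 2 := by
    have hp : ((K.orthogonalProjection (φ m) : H)) ∈ K :=
      (K.orthogonalProjection (φ m)).2
    have : ⟪φ m, v⟫_ℂ = ⟪v, v⟫_ℂ + ⟪(K.orthogonalProjection (φ m) : H), v⟫_ℂ := by
      rw [← inner_add_left]
      congr 1
      simp [hv]
    rw [this, (Submodule.mem_orthogonal K v).mp hvK _ hp, add_zero, inner_self_eq_norm_sq_to_K]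
    norm_num
  have hmmne : ⟪φ m, v⟫_ℂ ≠ 0 := by
    rw [hmm]
    simpa using hvne
  have hkv : ∀ k, k ≠ m → ⟪φ k, v⟫_ℂ = 0 := by
    intro k hk
    refine (Submodule.mem_orthogonal K v).mp hvK _ ?_
    rw [hK]
    exact Submodule.le_topologicalClosure _ (Submodule.subset_span ⟨k, hk, rfl⟩)
  -- for any coefficient sequence d satisfying the expansion, d m * ⟪φ m, v⟫ = ⟪f, v⟫
  have key : ∀ d : ℕ → ℂ,
      Tendsto (fun N => ∑ k ∈ Finset.range N, d k * ⟪φ k, v⟫_ℂ) atTop (𝓝 ⟪f, v⟫_ℂ) →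
      d m * ⟪φ m, v⟫_ℂ = ⟪f, v⟫_ℂ := by
    intro d hd
    have hev : ∀ᶠ N in atTop, ∑ k ∈ Finset.range N, d k * ⟪φ k, v⟫_ℂ
        = d m * ⟪φ m, v⟫_ℂ := by
      filter_upwards [eventually_ge_atTop (m + 1)] with N hN
      refine Finset.sum_eq_single_of_mem m (Finset.mem_range.mpr hN) ?_
      intro k _ hk
      rw [hkv k hk, mul_zero]
    have : Tendsto (fun _ : ℕ => d m * ⟪φ m, v⟫_ℂ) atTop (𝓝 ⟪f, v⟫_ℂ) :=
      hd.congr' hev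
    exact tendsto_nhds_unique tendsto_const_nhds this
  have h1 := key c (hc v)
  have h2 := key (fun k => ⟪f, ψ k⟫_ℂ) (hψ f v)
  have := h1.trans h2.symm
  exact mul_right_cancel₀ hmmne this
end

section
/- Suppose Φ = {φ_k}_{k≥0} in a separable Hilbert space H is such that Φ' = {φ_k}_{k≥1} is exact with biorthogonal sequence {φ̃_k}, and Φ has a reproducing partner Ψ = {ψ_k}_{k≥0}. Then (Φ̃, Φ') is itself a reproducing pair: ⟨g, h⟩ = Σ_{k=1}^∞ ⟨g, φ̃_k⟩⟨φ_k, h⟩ for all g, h ∈ H. -/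
open Filter Topology
open scoped InnerProductSpace

/-- If `Φ' = {φ_k}_{k≥1}` is exact with biorthogonal sequence `{φ̃_k}`, and
`Φ = {φ_k}_{k≥0}` has a reproducing partner `Ψ`, then `(Φ̃, Φ')` is itself a
reproducing pair: `⟨g, h⟩ = Σ_{k≥1} ⟨g, φ̃_k⟩⟨φ_k, h⟩` for all `g, h ∈ H`.
Here `φt k` denotes `φ̃_{k+1}`. -/
theorem biorthogonal_is_reproducing_partner
    {H : Type*} [NormedAddCommGroup H] [InnerProductSpace ℂ H]
    [CompleteSpace H] [TopologicalSpace.SeparableSpace H]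
    (φ ψ φt : ℕ → H)
    (hcomplete : Dense (Submodule.span ℂ (Set.range fun k => φ (k + 1)) : Set H))
    (hminimal : ∀ m : ℕ, φ (m + 1) ∉
      closure (Submodule.span ℂ ((fun k => φ (k + 1)) '' {n | n ≠ m}) : Set H))
    (hbi : ∀ j k : ℕ, ⟪φ (j + 1), φt k⟫_ℂ = if j = k then 1 else 0)
    (hrep : ∀ f g : H,
      Tendsto (fun N => ∑ k ∈ Finset.range N, ⟪f, ψ k⟫_ℂ * ⟪φ k, g⟫_ℂ)
        atTop (𝓝 ⟪f, g⟫_ℂ)) :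
    ∀ g h : H,
      Tendsto (fun N => ∑ k ∈ Finset.range N, ⟪g, φt k⟫_ℂ * ⟪φ (k + 1), h⟫_ℂ)
        atTop (𝓝 ⟪g, h⟫_ℂ) := by
  classical
  -- abbreviation for the "extra" coefficients
  set a : ℕ → ℂ := fun m => ⟪φ 0, φt m⟫_ℂ with ha
  -- Claim A: φ̃_m = a m • ψ 0 + ψ (m+1)
  have claimA : ∀ m : ℕ, φt m = a m • ψ 0 + ψ (m + 1) := by
    intro m
    have key : ∀ f : H, ⟪f, φt m⟫_ℂ = ⟪f, a m • ψ 0 + ψ (m + 1)⟫_ℂ := by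
      intro f
      have h1 := hrep f (φt m)
      have h2 : ∀ N : ℕ, N ≥ m + 2 →
          (∑ k ∈ Finset.range N, ⟪f, ψ k⟫_ℂ * ⟪φ k, φt m⟫_ℂ)
            = ⟪f, ψ 0⟫_ℂ * a m + ⟪f, ψ (m + 1)⟫_ℂ := by
        intro N hN
        have hterm : ∀ k ∈ Finset.range N,
            ⟪f, ψ k⟫_ℂ * ⟪φ k, φt m⟫_ℂ
              = (if k = 0 then ⟪f, ψ 0⟫_ℂ * a m else 0)
                + (if k = m + 1 then ⟪f, ψ (m + 1)⟫_ℂ else 0) := by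
          intro k _
          match k with
          | 0 => simp [ha]
          | (j + 1) =>
            rw [hbi j m]
            by_cases hj : j = m
            · subst hj; simp
            · simp [hj, fun h : j + 1 = m + 1 => hj (Nat.succ_injective h)]
        rw [Finset.sum_congr rfl hterm, Finset.sum_add_distrib,
          Finset.sum_ite_eq' (Finset.range N) 0 (fun _ => ⟪f, ψ 0⟫_ℂ * a m),
          Finset.sum_ite_eq' (Finset.range N) (m + 1) (fun _ => ⟪f, ψ (m + 1)⟫_ℂ)]
        have h0 : (0 : ℕ) ∈ Finset.range N := Finset.mem_range.mpr (by omega)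
        have hm1 : m + 1 ∈ Finset.range N := Finset.mem_range.mpr (by omega)
        simp [h0, hm1]
      have h3 : Tendsto (fun N => ∑ k ∈ Finset.range N, ⟪f, ψ k⟫_ℂ * ⟪φ k, φt m⟫_ℂ)
          atTop (𝓝 (⟪f, ψ 0⟫_ℂ * a m + ⟪f, ψ (m + 1)⟫_ℂ)) := by
        refine Tendsto.congr' ?_ tendsto_const_nhds
        filter_upwards [eventually_ge_atTop (m + 2)] with N hN
        exact (h2 N hN).symm
      have := tendsto_nhds_unique h1 h3
      rw [this, inner_add_right, inner_smul_right]
      ring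
    have hz : ⟪φt m - (a m • ψ 0 + ψ (m + 1)), φt m - (a m • ψ 0 + ψ (m + 1))⟫_ℂ = 0 := by
      rw [inner_sub_right, key (φt m - (a m • ψ 0 + ψ (m + 1))), sub_self]
    rw [inner_self_eq_zero, sub_eq_zero] at hz
    exact hz
  -- shifted reproducing sum
  have hshift : ∀ f h : H,
      Tendsto (fun N => ∑ k ∈ Finset.range N, ⟪f, ψ (k + 1)⟫_ℂ * ⟪φ (k + 1), h⟫_ℂ)
        atTop (𝓝 (⟪f, h⟫_ℂ - ⟪f, ψ 0⟫_ℂ * ⟪φ 0, h⟫_ℂ)) := by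
    intro f h
    have h1 := (hrep f h).comp (tendsto_add_atTop_nat 1)
    have h2 := h1.sub (tendsto_const_nhds (x := ⟪f, ψ 0⟫_ℂ * ⟪φ 0, h⟫_ℂ))
    refine Tendsto.congr (fun N => ?_) h2
    simp only [Function.comp]
    rw [Finset.sum_range_succ' (fun k => ⟪f, ψ k⟫_ℂ * ⟪φ k, h⟫_ℂ) N]
    ring
  -- decomposition of the target sum
  have hdecomp : ∀ (f h : H) (N : ℕ),
      (∑ k ∈ Finset.range N, ⟪f, φt k⟫_ℂ * ⟪φ (k + 1), h⟫_ℂ)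
        = (∑ k ∈ Finset.range N, ⟪f, ψ (k + 1)⟫_ℂ * ⟪φ (k + 1), h⟫_ℂ)
          + ⟪f, ψ 0⟫_ℂ * ∑ k ∈ Finset.range N, a k * ⟪φ (k + 1), h⟫_ℂ := by
    intro f h N
    rw [Finset.mul_sum, ← Finset.sum_add_distrib]
    refine Finset.sum_congr rfl fun k _ => ?_
    rw [claimA k, inner_add_right, inner_smul_right]
    ring
  -- the target partial sums for f = φ (j+1) are eventually constant
  have hconst : ∀ (j : ℕ) (h : H) (N : ℕ), N ≥ j + 1 →
      (∑ k ∈ Finset.range N, ⟪φ (j + 1), φt k⟫_ℂ * ⟪φ (k + 1), h⟫_ℂ)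
        = ⟪φ (j + 1), h⟫_ℂ := by
    intro j h N hN
    have : ∀ k ∈ Finset.range N, ⟪φ (j + 1), φt k⟫_ℂ * ⟪φ (k + 1), h⟫_ℂ
        = if k = j then ⟪φ (k + 1), h⟫_ℂ else 0 := by
      intro k _
      rw [hbi j k]
      by_cases hk : k = j
      · subst hk; simp
      · rw [if_neg (fun hh => hk hh.symm), if_neg hk, zero_mul]
    rw [Finset.sum_congr rfl this,
      Finset.sum_ite_eq' (Finset.range N) j (fun k => ⟪φ (k + 1), h⟫_ℂ)]
    simp [Finset.mem_range.mpr (by omega : j < N)]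
  intro g h
  by_cases hψ0 : ψ 0 = 0
  · -- trivial case: ψ 0 = 0
    have := hshift g h
    rw [hψ0, inner_zero_right, zero_mul, sub_zero] at this
    refine Tendsto.congr (fun N => ?_) this
    refine Finset.sum_congr rfl fun k _ => ?_
    rw [claimA k, hψ0, smul_zero, zero_add]
  · -- find a generator not orthogonal to ψ 0
    have hj : ∃ j : ℕ, ⟪φ (j + 1), ψ 0⟫_ℂ ≠ 0 := by
      by_contra hc
      push_neg at hc
      apply hψ0
      have hspan : Submodule.span ℂ (Set.range fun k => φ (k + 1))
          ≤ (ℂ ∙ (ψ 0))ᗮ := by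
        rw [Submodule.span_le]
        rintro x ⟨k, rfl⟩
        exact Submodule.mem_orthogonal_singleton_iff_inner_left.mpr (hc k)
      have hmem : ψ 0 ∈ (Submodule.span ℂ (Set.range fun k => φ (k + 1)))ᗮ := by
        rw [Submodule.mem_orthogonal]
        intro u hu
        exact Submodule.inner_left_of_mem_orthogonal
          (Submodule.mem_span_singleton_self (ψ 0)) (hspan hu)
      have htop : (Submodule.span ℂ (Set.range fun k => φ (k + 1)))ᗮ = ⊥ := by
        rw [← Submodule.topologicalClosure_eq_top_iff,
          ← Submodule.dense_iff_topologicalClosure_eq_top]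
        exact hcomplete
      simpa [htop] using hmem
    obtain ⟨j, hβ⟩ := hj
    set β := ⟪φ (j + 1), ψ 0⟫_ℂ with hβdef
    -- A_N h → ⟪φ 0, h⟫
    have hA : Tendsto (fun N => ∑ k ∈ Finset.range N, a k * ⟪φ (k + 1), h⟫_ℂ)
        atTop (𝓝 ⟪φ 0, h⟫_ℂ) := by
      have hT : Tendsto (fun N => ∑ k ∈ Finset.range N,
          ⟪φ (j + 1), φt k⟫_ℂ * ⟪φ (k + 1), h⟫_ℂ) atTop (𝓝 ⟪φ (j + 1), h⟫_ℂ) := by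
        refine Tendsto.congr' ?_ tendsto_const_nhds
        filter_upwards [eventually_ge_atTop (j + 1)] with N hN
        exact (hconst j h N hN).symm
      have hsub := hT.sub (hshift (φ (j + 1)) h)
      have heq : (fun N => (∑ k ∈ Finset.range N,
            ⟪φ (j + 1), φt k⟫_ℂ * ⟪φ (k + 1), h⟫_ℂ)
          - ∑ k ∈ Finset.range N, ⟪φ (j + 1), ψ (k + 1)⟫_ℂ * ⟪φ (k + 1), h⟫_ℂ)
          = fun N => β * ∑ k ∈ Finset.range N, a k * ⟪φ (k + 1), h⟫_ℂ := by
        funext N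
        rw [hdecomp (φ (j + 1)) h N]
        ring
      rw [heq] at hsub
      have hlim : ⟪φ (j + 1), h⟫_ℂ - (⟪φ (j + 1), h⟫_ℂ - β * ⟪φ 0, h⟫_ℂ)
          = β * ⟪φ 0, h⟫_ℂ := by ring
      rw [hlim] at hsub
      have := hsub.const_mul β⁻¹
      simp only [← mul_assoc, inv_mul_cancel₀ hβ, one_mul] at this
      exact this
    have hfinal := (hshift g h).add (hA.const_mul ⟪g, ψ 0⟫_ℂ)
    have : ⟪g, h⟫_ℂ - ⟪g, ψ 0⟫_ℂ * ⟪φ 0, h⟫_ℂ + ⟪g, ψ 0⟫_ℂ * ⟪φ 0, h⟫_ℂ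
        = ⟪g, h⟫_ℂ := by ring
    rw [this] at hfinal
    exact hfinal.congr fun N => (hdecomp g h N).symm
end

section
/- Suppose Φ = {φ_k}_{k≥0} in a separable Hilbert space H is such that Φ' = {φ_k}_{k≥n} is exact (complete and minimal) for some n ≥ 1, and Φ has a reproducing partner Ψ = {ψ_k}_{k≥0}, i.e., ⟨f,g⟩ = Σ_{k≥0} ⟨f, ψ_k⟩⟨φ_k, g⟩ for all f, g ∈ H. Then Φ' is a weak Schauder basis for H: every f ∈ H has a unique weak expansion f = Σ_{k≥n} c_k φ_k. -/
open Filter Topology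
open scoped InnerProductSpace

/-- If `Φ' = {φ_k}_{k≥n}` is exact (complete and minimal) for some `n ≥ 1` and
`Φ = {φ_k}_{k≥0}` has a reproducing partner `Ψ`, then `Φ'` is a weak Schauder basis
for `H`: every `f ∈ H` has a unique weak expansion `f = Σ_{k≥n} c_k φ_k`. -/
theorem overcomplete_by_n_weak_schauder_basis
    {H : Type*} [NormedAddCommGroup H] [InnerProductSpace ℂ H]
    [CompleteSpace H] [TopologicalSpace.SeparableSpace H]
    (n : ℕ) (hn : 1 ≤ n) (φ ψ : ℕ → H)
    (hcomplete : Dense (Submodule.span ℂ (Set.range fun k => φ (k + n)) : Set H))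
    (hminimal : ∀ m : ℕ, φ (m + n) ∉
      closure (Submodule.span ℂ ((fun k => φ (k + n)) '' {j | j ≠ m}) : Set H))
    (hrep : ∀ f g : H,
      Tendsto (fun N => ∑ k ∈ Finset.range N, ⟪f, ψ k⟫_ℂ * ⟪φ k, g⟫_ℂ)
        atTop (𝓝 ⟪f, g⟫_ℂ)) :
    ∀ f : H, ∃! c : ℕ → ℂ, ∀ g : H,
      Tendsto (fun N => ∑ k ∈ Finset.range N, c k * ⟪φ (k + n), g⟫_ℂ)
        atTop (𝓝 ⟪f, g⟫_ℂ) := by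
  classical
  -- Step 1: a biorthogonal sequence from minimality
  have hbi : ∀ m : ℕ, ∃ gm : H,
      ⟪φ (m + n), gm⟫_ℂ = 1 ∧ ∀ j : ℕ, j ≠ m → ⟪φ (j + n), gm⟫_ℂ = 0 := by
    intro m
    set M : Submodule ℂ H :=
      (Submodule.span ℂ ((fun k => φ (k + n)) '' {j | j ≠ m})).topologicalClosure with hMdef
    have hMclosed : IsClosed (M : Set H) := Submodule.isClosed_topologicalClosure _
    haveI : CompleteSpace M := hMclosed.completeSpace_coe
    have hnot : φ (m + n) ∉ M := by
      intro hmem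
      apply hminimal m
      rw [← Submodule.topologicalClosure_coe]
      exact hmem
    set w : H := φ (m + n) - (M.orthogonalProjectionOnto (φ (m + n)) : H) with hwdef
    have hwmem : w ∈ Mᗮ := Submodule.sub_starProjection_mem_orthogonal (K := M) _
    have hwne : w ≠ 0 := by
      intro h
      apply hnot
      have h2 : φ (m + n) = (M.orthogonalProjectionOnto (φ (m + n)) : H) := by
        rwa [sub_eq_zero] at h
      rw [h2]
      exact Submodule.coe_mem _
    have hwnorm : ((‖w‖ : ℂ)) ^ 2 ≠ 0 := by
      simp [hwne]
    refine ⟨(((‖w‖ : ℂ)) ^ 2)⁻¹ • w, ?_, ?_⟩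
    · have hproj : ⟪(M.orthogonalProjectionOnto (φ (m + n)) : H), w⟫_ℂ = 0 :=
        (Submodule.mem_orthogonal _ _).mp hwmem _ (Submodule.coe_mem _)
      have hsplit : φ (m + n) = w + (M.orthogonalProjectionOnto (φ (m + n)) : H) := by
        rw [hwdef]; abel
      have h1 : ⟪φ (m + n), w⟫_ℂ = ((‖w‖ : ℂ)) ^ 2 := by
        conv_lhs => rw [hsplit]
        rw [inner_add_left, hproj, add_zero, inner_self_eq_norm_sq_to_K]
        norm_cast
      rw [inner_smul_right, h1, inv_mul_cancel₀ hwnorm]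
    · intro j hj
      have hmem : φ (j + n) ∈ M :=
        Submodule.le_topologicalClosure _ (Submodule.subset_span ⟨j, hj, rfl⟩)
      rw [inner_smul_right, (Submodule.mem_orthogonal _ _).mp hwmem _ hmem, mul_zero]
  choose gb hgb1 hgb0 using hbi
  -- Step 2: any weak expansion has coefficients given by the biorthogonal sequence
  have key : ∀ (f : H) (c : ℕ → ℂ),
      (∀ g : H, Tendsto (fun N => ∑ k ∈ Finset.range N, c k * ⟪φ (k + n), g⟫_ℂ)
        atTop (𝓝 ⟪f, g⟫_ℂ)) → ∀ m, c m = ⟪f, gb m⟫_ℂ := by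
    intro f c hc m
    have h1 := hc (gb m)
    have heq : (fun _ : ℕ => c m) =ᶠ[atTop]
        (fun N => ∑ k ∈ Finset.range N, c k * ⟪φ (k + n), gb m⟫_ℂ) := by
      filter_upwards [eventually_ge_atTop (m + 1)] with N hN
      rw [Finset.sum_eq_single_of_mem m (Finset.mem_range.mpr (by omega))]
      · rw [hgb1 m, mul_one]
      · intro k _ hk
        rw [hgb0 m k hk, mul_zero]
    exact tendsto_nhds_unique (tendsto_const_nhds.congr' heq) h1
  -- Step 3: the finite-rank operator F and A = I - F
  set F : H →L[ℂ] H := ∑ k ∈ Finset.range n, (innerSL ℂ (ψ k)).smulRight (φ k) with hFdef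
  set A : H →L[ℂ] H := ContinuousLinearMap.id ℂ H - F with hAdef
  have hAapply : ∀ u : H, A u = u - ∑ k ∈ Finset.range n, ⟪ψ k, u⟫_ℂ • φ k := by
    intro u
    simp [hAdef, hFdef, ContinuousLinearMap.sum_apply]
  have hAinner : ∀ u g : H,
      ⟪A u, g⟫_ℂ = ⟪u, g⟫_ℂ - ∑ k ∈ Finset.range n, ⟪u, ψ k⟫_ℂ * ⟪φ k, g⟫_ℂ := by
    intro u g
    rw [hAapply, inner_sub_left, sum_inner]
    congr 1
    refine Finset.sum_congr rfl fun k _ => ?_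
    rw [inner_smul_left, inner_conj_symm]
  -- Step 4: E = range A ⊔ span Φ' is all of H
  set U : Submodule ℂ H := Submodule.span ℂ (ψ '' Set.Iio n) with hUdef
  haveI : FiniteDimensional ℂ U :=
    FiniteDimensional.span_of_finite ℂ ((Set.finite_Iio n).image ψ)
  set E : Submodule ℂ H :=
    LinearMap.range (A : H →ₗ[ℂ] H) ⊔ Submodule.span ℂ (Set.range fun k => φ (k + n)) with hEdef
  have hKE : ∀ x : H, (∀ k, k < n → ⟪ψ k, x⟫_ℂ = 0) → x ∈ E := by
    intro x hx
    apply Submodule.mem_sup_left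
    refine ⟨x, ?_⟩
    rw [ContinuousLinearMap.coe_coe, hAapply]
    rw [Finset.sum_eq_zero, sub_zero]
    intro k hk
    rw [hx k (Finset.mem_range.mp hk), zero_smul]
  have hEdense : Dense (E : Set H) :=
    hcomplete.mono (SetLike.coe_subset_coe.mpr le_sup_right)
  set Q : H →L[ℂ] H := U.subtypeL.comp (U.orthogonalProjectionOnto) with hQdef
  have hQmem : ∀ x : H, Q x ∈ U := fun x => Submodule.coe_mem _
  have hsubE : ∀ x : H, x - Q x ∈ E := by
    intro x
    apply hKE
    intro k hk
    have hx : x - Q x ∈ Uᗮ := by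
      simpa [hQdef] using Submodule.sub_starProjection_mem_orthogonal (K := U) x
    exact (Submodule.mem_orthogonal _ _).mp hx _ (Submodule.subset_span ⟨k, hk, rfl⟩)
  have hUE : U ≤ E := by
    intro u hu
    set V : Submodule ℂ H := Submodule.map (Q : H →ₗ[ℂ] H) E with hVdef
    have hVU : V ≤ U := by
      rintro _ ⟨x, -, rfl⟩
      exact hQmem x
    have hVE : V ≤ E := by
      rintro _ ⟨x, hx, rfl⟩
      have h2 : Q x = x - (x - Q x) := by abel
      rw [ContinuousLinearMap.coe_coe, h2]
      exact Submodule.sub_mem _ hx (hsubE x)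
    haveI : FiniteDimensional ℂ V := Submodule.finiteDimensional_of_le hVU
    have hVclosed : IsClosed (V : Set H) := Submodule.closed_of_finiteDimensional V
    have hQu : Q u = u := by
      have h3 := Submodule.starProjection_eq_self_iff.mpr hu
      simpa [hQdef] using h3
    have humem : u ∈ closure (V : Set H) := by
      have h1 : u ∈ closure (E : Set H) := hEdense u
      have h2 : Q u ∈ closure (Q '' (E : Set H)) :=
        image_closure_subset_closure_image Q.continuous ⟨u, h1, rfl⟩
      rw [hQu] at h2
      have h4 : (V : Set H) = Q '' (E : Set H) := Submodule.map_coe _ _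
      rw [h4]
      exact h2
    rw [hVclosed.closure_eq] at humem
    exact hVE humem
  have hEtop : ∀ x : H, x ∈ E := by
    intro x
    have h1 : x = (x - Q x) + Q x := by abel
    rw [h1]
    exact Submodule.add_mem _ (hsubE x) (hUE (hQmem x))
  -- Step 5: existence and uniqueness for each f
  intro f
  obtain ⟨r, hr, v, hv, hf⟩ := Submodule.mem_sup.mp (hEtop f)
  obtain ⟨u, rfl⟩ := hr
  rw [Finsupp.mem_span_range_iff_exists_finsupp] at hv
  obtain ⟨a, hva⟩ := hv
  set c : ℕ → ℂ := fun m => ⟪u, ψ (m + n)⟫_ℂ + (starRingEnd ℂ) (a m) with hcdef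
  have hcprop : ∀ g : H,
      Tendsto (fun N => ∑ k ∈ Finset.range N, c k * ⟪φ (k + n), g⟫_ℂ)
        atTop (𝓝 ⟪f, g⟫_ℂ) := by
    intro g
    -- the finitely supported part converges to ⟪v, g⟫
    have hvg : ⟪v, g⟫_ℂ = ∑ m ∈ a.support, (starRingEnd ℂ) (a m) * ⟪φ (m + n), g⟫_ℂ := by
      rw [← hva, Finsupp.sum, sum_inner]
      exact Finset.sum_congr rfl fun i _ => inner_smul_left _ _ _
    have hT2 : Tendsto
        (fun N => ∑ m ∈ Finset.range N, (starRingEnd ℂ) (a m) * ⟪φ (m + n), g⟫_ℂ)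
        atTop (𝓝 ⟪v, g⟫_ℂ) := by
      refine tendsto_const_nhds.congr' ?_
      filter_upwards [eventually_ge_atTop (a.support.sup id + 1)] with N hN
      rw [hvg]
      refine Finset.sum_subset ?_ ?_
      · intro m hm
        have hle : m ≤ a.support.sup id := Finset.le_sup (f := id) hm
        exact Finset.mem_range.mpr (by omega)
      · intro m _ hm
        rw [Finsupp.notMem_support_iff.mp hm, map_zero, zero_mul]
    -- the shifted reproducing series converges to ⟪A u, g⟫
    have hT1' := (hrep u g).comp (tendsto_add_atTop_nat n)
    have hsum : ∀ N : ℕ, ∑ k ∈ Finset.range (N + n), ⟪u, ψ k⟫_ℂ * ⟪φ k, g⟫_ℂ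
        = (∑ k ∈ Finset.range n, ⟪u, ψ k⟫_ℂ * ⟪φ k, g⟫_ℂ)
          + ∑ m ∈ Finset.range N, ⟪u, ψ (m + n)⟫_ℂ * ⟪φ (m + n), g⟫_ℂ := by
      intro N
      rw [add_comm N n, Finset.sum_range_add]
      congr 1
      exact Finset.sum_congr rfl fun m _ => by rw [add_comm n m]
    have hT1 : Tendsto
        (fun N => ∑ m ∈ Finset.range N, ⟪u, ψ (m + n)⟫_ℂ * ⟪φ (m + n), g⟫_ℂ)
        atTop (𝓝 (⟪u, g⟫_ℂ - ∑ k ∈ Finset.range n, ⟪u, ψ k⟫_ℂ * ⟪φ k, g⟫_ℂ)) := by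
      have h2 := hT1'.sub_const (∑ k ∈ Finset.range n, ⟪u, ψ k⟫_ℂ * ⟪φ k, g⟫_ℂ)
      refine h2.congr fun N => ?_
      show (∑ k ∈ Finset.range (N + n), ⟪u, ψ k⟫_ℂ * ⟪φ k, g⟫_ℂ)
          - (∑ k ∈ Finset.range n, ⟪u, ψ k⟫_ℂ * ⟪φ k, g⟫_ℂ) = _
      rw [hsum N]; ring
    have hsum2 : ∀ N : ℕ, ∑ k ∈ Finset.range N, c k * ⟪φ (k + n), g⟫_ℂ
        = (∑ m ∈ Finset.range N, ⟪u, ψ (m + n)⟫_ℂ * ⟪φ (m + n), g⟫_ℂ)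
          + ∑ m ∈ Finset.range N, (starRingEnd ℂ) (a m) * ⟪φ (m + n), g⟫_ℂ := by
      intro N
      rw [← Finset.sum_add_distrib]
      exact Finset.sum_congr rfl fun k _ => by rw [hcdef]; ring
    have hlim : ⟪f, g⟫_ℂ
        = (⟪u, g⟫_ℂ - ∑ k ∈ Finset.range n, ⟪u, ψ k⟫_ℂ * ⟪φ k, g⟫_ℂ) + ⟪v, g⟫_ℂ := by
      rw [← hf, inner_add_left, ContinuousLinearMap.coe_coe, hAinner]
    rw [hlim]
    exact ((hT1.add hT2).congr fun N => (hsum2 N).symm)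
  exact ⟨c, hcprop, fun c' hc' =>
    funext fun m => (key f c' hc' m).trans (key f c hcprop m).symm⟩
end
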